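/- Let q > 0 and suppose two proper paths m and n for q satisfy c(q,m) = c(q,n). Then there exists a proper loop u for q such that m equals the zero-skipped composition (un)*. The loop u is the trivial loop (0) if and only if m = n. -/

import Mathlib

noncomputable def cfRev (q : ℝ) : List ℤ → ℝ
  | [] => 0
  | [a] => (a : ℝ)
  | a :: b :: rest => (a : ℝ) + 1 / (q * cfRev q (b :: rest))

/-- `cf q [m₀, …, m_k]` is the continued fraction `m_k + 1/(q m_{k-1} + q/( … + q/(q m₀)))`. -/
noncomputable def cf (q : ℝ) (l : List ℤ) : ℝ := cfRev q l.reverse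

/-- `l` is a path for `q`: all denominators nonzero, i.e. every proper nonempty prefix
has nonzero continued-fraction value. -/
def IsPath (q : ℝ) (l : List ℤ) : Prop :=
  l ≠ [] ∧ ∀ t : List ℤ, t ≠ [] → t <+: l → t.length < l.length → cf q t ≠ 0

/-- all entries except possibly the last are nonzero -/
def IsProper (l : List ℤ) : Prop := ∀ i, i + 1 < l.length → l.getD i 0 ≠ 0

def IsLoop (q : ℝ) (l : List ℤ) : Prop := IsPath q l ∧ cf q l = 0

/-- the weight `q^{k/2} ∏_{j<k} |c(q, m_j)|`. -/
noncomputable def weight (q : ℝ) (l : List ℤ) : ℝ :=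
  Real.sqrt (q ^ (l.length - 1)) * ∏ j ∈ Finset.range (l.length - 1), |cf q (l.take (j + 1))|

/-- composition of paths -/
def comp (m n : List ℤ) : List ℤ := m.dropLast ++ (m.getLastD 0 + n.headD 0) :: n.tail

/-- one step of zero-skipping -/
def SkipStep (l l' : List ℤ) : Prop :=
  ∃ (u v : List ℤ) (x y : ℤ), l = u ++ x :: 0 :: y :: v ∧ l' = u ++ (x + y) :: v

/-- the weight `w_q` is unique -/
def WeightUnique (q : ℝ) : Prop :=
  ∀ m n : List ℤ, IsPath q m → IsProper m → IsPath q n → IsProper n →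
    cf q m = cf q n → weight q m = weight q n

lemma cf_singleton (q : ℝ) (x : ℤ) : cf q [x] = x := rfl

lemma cf_append_singleton (q : ℝ) {l : List ℤ} (h : l ≠ []) (x : ℤ) :
    cf q (l ++ [x]) = x + 1 / (q * cf q l) := by
  obtain ⟨b, rest, hrev⟩ : ∃ b rest, l.reverse = b :: rest := by
    cases hr : l.reverse with
    | nil => exact absurd (by simpa using congrArg List.reverse hr) h
    | cons b rest => exact ⟨b, rest, rfl⟩
  simp [cf, List.reverse_append, hrev, cfRev]

lemma proper_of_forall_ne {l : List ℤ} (h : ∀ x ∈ l, x ≠ 0) : IsProper l := by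
  intro i hi
  have hi' : i < l.length := by omega
  rw [l.getD_eq_getElem 0 hi']
  exact h _ (l.getElem_mem hi')

lemma ne_zero_of_mem_dropLast {l : List ℤ} (h : IsProper l) {x : ℤ}
    (hx : x ∈ l.dropLast) : x ≠ 0 := by
  obtain ⟨i, hi, rfl⟩ := List.mem_iff_getElem.mp hx
  have hi' : i + 1 < l.length := by
    have := l.length_dropLast ▸ hi; omega
  have h2 := h i hi'
  rw [l.getD_eq_getElem 0 (by omega)] at h2
  rwa [List.getElem_dropLast]

lemma isPath_of_prefix {q : ℝ} {l t : List ℤ} (hl : IsPath q l) (ht : t <+: l)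
    (hne : t ≠ []) : IsPath q t := by
  refine ⟨hne, fun r hr hpre hlen => hl.2 r hr (hpre.trans ht) ?_⟩
  exact lt_of_lt_of_le hlen ht.length_le

lemma isPath_append_singleton {q : ℝ} {s : List ℤ} (hs : IsPath q s)
    (h0 : cf q s ≠ 0) (x : ℤ) : IsPath q (s ++ [x]) := by
  refine ⟨by simp, fun t ht hpre hlen => ?_⟩
  simp only [List.length_append, List.length_cons, List.length_nil] at hlen
  have hts : t <+: s := List.prefix_of_prefix_length_le hpre (s.prefix_append [x]) (by omega)
  rcases lt_or_eq_of_le hts.length_le with hlt | heq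
  · exact hs.2 t ht hts hlt
  · rwa [hts.eq_of_length heq]

lemma cf_dropLast_ne {q : ℝ} {l : List ℤ} (hl : IsPath q l) (h : l.dropLast ≠ []) :
    cf q l.dropLast ≠ 0 := by
  refine hl.2 _ h (List.dropLast_prefix l) ?_
  have : l ≠ [] := hl.1
  have : 0 < l.length := List.length_pos_iff.mpr this
  rw [List.length_dropLast]; omega

lemma comp_zero (n : List ℤ) (hn : n ≠ []) : comp [0] n = n := by
  cases n with
  | nil => exact absurd rfl hn
  | cons a t => simp [comp]

lemma comp_append_singleton (u B : List ℤ) (hB : B ≠ []) (b : ℤ) :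
    comp u (B ++ [b]) = comp u B ++ [b] := by
  cases B with
  | nil => exact absurd rfl hB
  | cons c t => simp [comp]

lemma skipStep_append {a b : List ℤ} (h : SkipStep a b) (c : ℤ) :
    SkipStep (a ++ [c]) (b ++ [c]) := by
  obtain ⟨u, v, x, y, h1, h2⟩ := h
  exact ⟨u, v ++ [c], x, y, by simp [h1], by simp [h2]⟩

lemma skipChain (C : List ℤ) (s : List ℤ) (x y : ℤ) :
    Relation.ReflTransGen SkipStep
      (s ++ x :: ((C.reverse.map (fun z => -z)) ++ 0 :: (C ++ [y]))) (s ++ [x + y]) := by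
  induction C generalizing s x with
  | nil => exact Relation.ReflTransGen.single ⟨s, [], x, y, by simp, rfl⟩
  | cons c C' ih =>
    have step : SkipStep (s ++ x :: (((c :: C').reverse.map (fun z => -z)) ++ 0 :: ((c :: C') ++ [y])))
        (s ++ x :: ((C'.reverse.map (fun z => -z)) ++ 0 :: (C' ++ [y]))) :=
      ⟨s ++ x :: (C'.reverse.map (fun z => -z)), C' ++ [y], -c, c, by simp, by simp⟩
    exact Relation.ReflTransGen.head step (ih s x)

lemma keyLemma (q : ℝ) (hq : 0 < q) (B : List ℤ) : B ≠ [] →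
    (∀ t, t ≠ [] → t <+: B → cf q t ≠ 0) → ∀ s : List ℤ, IsPath q s →
    cf q s = 1 / (q * cf q B) →
    IsLoop q (s ++ B.reverse.map (fun z => -z)) := by
  have hq0 : q ≠ 0 := ne_of_gt hq
  induction B using List.reverseRecOn with
  | nil => intro h; exact absurd rfl h
  | append_singleton B' c ih =>
    intro _ hpre s hs hcfs
    have hcfB : cf q (B' ++ [c]) ≠ 0 := hpre _ (by simp) (List.prefix_refl _)
    have hcfs_ne : cf q s ≠ 0 := by
      rw [hcfs]; exact one_div_ne_zero (mul_ne_zero hq0 hcfB)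
    have hkey : 1 / (q * cf q s) = cf q (B' ++ [c]) := by
      rw [hcfs]; field_simp
    rcases eq_or_ne B' [] with rfl | hB'
    · -- B = [c]
      have hc : (c : ℝ) ≠ 0 := by simpa [cf_singleton] using hcfB
      constructor
      · exact isPath_append_singleton hs hcfs_ne _
      · rw [show ([] ++ [c] : List ℤ).reverse.map (fun z => -z) = [-c] by simp,
          cf_append_singleton q hs.1, hkey]
        simp [cf_singleton]
    · have hcfB' : cf q B' ≠ 0 := hpre _ hB' (B'.prefix_append [c])
      have hstep : cf q (s ++ [-c]) = 1 / (q * cf q B') := by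
        rw [cf_append_singleton q hs.1, hkey, cf_append_singleton q hB']
        push_cast
        ring
      have hgoal := ih hB' (fun t ht htp => hpre t ht (htp.trans (B'.prefix_append [c])))
        (s ++ [-c]) (isPath_append_singleton hs hcfs_ne _) hstep
      have heq : s ++ (B' ++ [c]).reverse.map (fun z => -z)
          = (s ++ [-c]) ++ B'.reverse.map (fun z => -z) := by simp
      rwa [heq]

lemma comp_concat (L : List ℤ) (x c : ℤ) (t : List ℤ) :
    comp (L ++ [x]) (c :: t) = L ++ (x + c) :: t := by
  simp [comp, List.dropLast_concat]

lemma isPath_singleton (q : ℝ) (x : ℤ) : IsPath q [x] := by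
  refine ⟨by simp, fun t ht htp hlen => ?_⟩
  have := List.length_pos_iff.mpr ht
  simp only [List.length_cons, List.length_nil] at hlen
  omega

lemma mainLemma (q : ℝ) (hq : 0 < q) : ∀ N : ℕ, ∀ m n : List ℤ, n.length = N →
    IsPath q m → IsProper m → IsPath q n → IsProper n → cf q m = cf q n →
    ∃ u : List ℤ, IsLoop q u ∧ IsProper u ∧
      Relation.ReflTransGen SkipStep (comp u n) m ∧ (u = [0] ↔ m = n) := by
  have hq0 : q ≠ 0 := ne_of_gt hq
  intro N
  induction N using Nat.strong_induction_on with
  | _ N IH =>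
  intro m n hN hm hmp hn hnp h
  by_cases hmn : m = n
  · subst hmn
    refine ⟨[0], ⟨isPath_singleton q 0, by simp [cf_singleton]⟩, ?_, ?_, by simp⟩
    · intro i hi; simp at hi
    · rw [comp_zero _ hm.1]
  · obtain rfl | ⟨A, a, hma⟩ := List.eq_nil_or_concat m
    · exact absurd rfl hm.1
    rw [List.concat_eq_append] at hma
    subst hma
    obtain rfl | ⟨B, b, hnb⟩ := List.eq_nil_or_concat n
    · exact absurd rfl hn.1
    rw [List.concat_eq_append] at hnb
    subst hnb
    -- cf values of dropLasts
    by_cases hab : a = b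
    · -- equal last entries: both A B nonempty, recurse
      subst hab
      have hA : A ≠ [] := by
        rintro rfl
        rcases eq_or_ne B ([] : List ℤ) with rfl | hB
        · exact hmn rfl
        · have hcfB : cf q B ≠ 0 := by
            have := cf_dropLast_ne hn (by simpa [List.dropLast_concat] using hB)
            simpa [List.dropLast_concat] using this
          rw [show ([] : List ℤ) ++ [a] = [a] by simp, cf_singleton,
            cf_append_singleton q hB] at h
          exact one_div_ne_zero (mul_ne_zero hq0 hcfB) (by linarith)
      have hB : B ≠ [] := by
        rintro rfl
        have hcfA : cf q A ≠ 0 := by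
          have := cf_dropLast_ne hm (by simpa [List.dropLast_concat] using hA)
          simpa [List.dropLast_concat] using this
        rw [show ([] : List ℤ) ++ [a] = [a] by simp, cf_singleton,
          cf_append_singleton q hA] at h
        exact one_div_ne_zero (mul_ne_zero hq0 hcfA) (by linarith)
      have hcfA : cf q A ≠ 0 := by
        have := cf_dropLast_ne hm (by simpa [List.dropLast_concat] using hA)
        simpa [List.dropLast_concat] using this
      have hcfB : cf q B ≠ 0 := by
        have := cf_dropLast_ne hn (by simpa [List.dropLast_concat] using hB)
        simpa [List.dropLast_concat] using this
      have hcfAB : cf q A = cf q B := by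
        rw [cf_append_singleton q hA, cf_append_singleton q hB] at h
        have h2 : (q * cf q A)⁻¹ = (q * cf q B)⁻¹ := by
          rw [← one_div, ← one_div]; linarith
        exact mul_left_cancel₀ hq0 (inv_inj.mp h2)
      have hpathA : IsPath q A := isPath_of_prefix hm (A.prefix_append [a]) hA
      have hpathB : IsPath q B := isPath_of_prefix hn (B.prefix_append [a]) hB
      have hpropA : IsProper A := proper_of_forall_ne (fun x hx =>
        ne_zero_of_mem_dropLast hmp (by simpa [List.dropLast_concat] using hx))
      have hpropB : IsProper B := proper_of_forall_ne (fun x hx =>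
        ne_zero_of_mem_dropLast hnp (by simpa [List.dropLast_concat] using hx))
      have hlen : B.length < N := by
        rw [← hN]; simp
      obtain ⟨u, hu1, hu2, hu3, hu4⟩ := IH B.length hlen A B rfl hpathA hpropA hpathB hpropB hcfAB
      refine ⟨u, hu1, hu2, ?_, ?_⟩
      · rw [comp_append_singleton u B hB]
        exact Relation.ReflTransGen.lift (fun l => l ++ [a])
          (fun _ _ hs => skipStep_append hs a) _ _ hu3
      · rw [hu4]
        constructor
        · rintro rfl; rfl
        · intro he
          have := congrArg List.dropLast he
          simpa [List.dropLast_concat] using this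
    · -- distinct last entries
      have hab' : a - b ≠ 0 := sub_ne_zero.mpr hab
      set u : List ℤ := A ++ (a - b) :: (B.reverse.map (fun z => -z)) with hu_def
      have hmemu : (a - b) ∈ u := by simp [hu_def]
      have humem : ∀ x ∈ u, x ≠ 0 := by
        intro x hx
        rw [hu_def] at hx
        simp only [List.mem_append, List.mem_cons, List.mem_map, List.mem_reverse] at hx
        rcases hx with hx | rfl | ⟨z, hz, rfl⟩
        · exact ne_zero_of_mem_dropLast hmp (by simpa [List.dropLast_concat] using hx)
        · exact hab'
        · have hz0 : z ≠ 0 := ne_zero_of_mem_dropLast hnp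
            (by simpa [List.dropLast_concat] using hz)
          simpa using hz0
      have hproper : IsProper u := proper_of_forall_ne humem
      have hiff : (u = [0] ↔ A ++ [a] = B ++ [b]) := by
        constructor
        · intro h0
          rw [h0] at hmemu
          simp at hmemu
          exact absurd hmemu hab'
        · intro h'; exact absurd h' hmn
      have hcfa : cf q (A ++ [a - b]) = cf q (A ++ [a]) - b := by
        rcases eq_or_ne A ([] : List ℤ) with rfl | hA
        · simp only [List.nil_append, cf_singleton]; push_cast; ring
        · rw [cf_append_singleton q hA, cf_append_singleton q hA]; push_cast; ring
      have hpaths : IsPath q (A ++ [a - b]) := by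
        rcases eq_or_ne A ([] : List ℤ) with rfl | hA
        · simpa using isPath_singleton q (a - b)
        · refine isPath_append_singleton (isPath_of_prefix hm (A.prefix_append [a]) hA) ?_ _
          have := cf_dropLast_ne hm (by simpa [List.dropLast_concat] using hA)
          simpa [List.dropLast_concat] using this
      rcases eq_or_ne B ([] : List ℤ) with rfl | hB
      · -- n = [b]
        have hloop : IsLoop q u := by
          constructor
          · have : u = A ++ [a - b] := by simp [hu_def]
            rwa [this]
          · have h1 : cf q u = cf q (A ++ [a - b]) := by
              rw [show u = A ++ [a - b] by simp [hu_def]]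
            rw [h1, hcfa, h]
            simp [cf_singleton]
        have hcomp : comp u (([] : List ℤ) ++ [b]) = A ++ [a] := by
          rw [show u = A ++ [a - b] by simp [hu_def]]
          simp [comp, List.dropLast_concat, sub_add_cancel]
        exact ⟨u, hloop, hproper, by rw [hcomp], hiff⟩
      · -- B ≠ []
        have hcfB : cf q B ≠ 0 := by
          have := cf_dropLast_ne hn (by simpa [List.dropLast_concat] using hB)
          simpa [List.dropLast_concat] using this
        have hpre : ∀ t, t ≠ [] → t <+: B → cf q t ≠ 0 := by
          intro t ht htp
          refine hn.2 t ht (htp.trans (B.prefix_append [b])) ?_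
          have := htp.length_le
          simp only [List.length_append, List.length_cons, List.length_nil]
          omega
        have hcfs : cf q (A ++ [a - b]) = 1 / (q * cf q B) := by
          rw [hcfa, h, cf_append_singleton q hB]; ring
        have hloop : IsLoop q u := by
          rw [show u = (A ++ [a - b]) ++ B.reverse.map (fun z => -z) by simp [hu_def]]
          exact keyLemma q hq B hB hpre (A ++ [a - b]) hpaths hcfs
        obtain ⟨b0, B1, rfl⟩ : ∃ b0 B1, B = b0 :: B1 := by
          cases B with
          | nil => exact absurd rfl hB
          | cons x xs => exact ⟨x, xs, rfl⟩
        have hcomp : comp u ((b0 :: B1) ++ [b]) =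
            A ++ (a - b) :: ((B1.reverse.map (fun z => -z)) ++ 0 :: (B1 ++ [b])) := by
          rw [show u = (A ++ (a - b) :: (B1.reverse.map (fun z => -z))) ++ [-b0] by
            simp [hu_def]]
          rw [show ((b0 :: B1) ++ [b]) = b0 :: (B1 ++ [b]) by simp, comp_concat]
          simp
        refine ⟨u, hloop, hproper, ?_, hiff⟩
        rw [hcomp]
        have hchain := skipChain B1 A (a - b) b
        rwa [show a - b + b = a by ring] at hchain

theorem stmt5 (q : ℝ) (hq : 0 < q) (m n : List ℤ)
    (hm : IsPath q m) (hmp : IsProper m) (hn : IsPath q n) (hnp : IsProper n)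
    (h : cf q m = cf q n) :
    ∃ u : List ℤ, IsLoop q u ∧ IsProper u ∧
      Relation.ReflTransGen SkipStep (comp u n) m ∧ (u = [0] ↔ m = n) :=
  mainLemma q hq n.length m n rfl hm hmp hn hnp h
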